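/- For the rotationally symmetric metric g = ((a₁+a₂)/2 + h(cos r))² dθ² + sin²r dφ² with h(x) = (a₁−a₂)x/2, the vector field W = (sin(2r)/2) ∂/∂r is not a projective vector field: it fails to satisfy the projective vector field PDE system 0 = −W¹_{rr} + ... with R⁰ = R² = 0, R¹ = ((a₂−a₁)(cos²r+1) − 2(a₁+a₂)cos r)/(((a₁−a₂)cos r + a₁+a₂) sin r), R³ = −2 sin(2r)/((a₁−a₂)cos r + a₁+a₂)². -/

import Mathlib

/-- The coefficient `R¹` of the projective vector field PDE system for the rotationally
symmetric Besse metric `g = ((a₁+a₂)/2 + h(cos r))² dθ² + sin²(r) dφ²`,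
`h(x) = (a₁−a₂)x/2`:
`R¹(r) = ((a₂−a₁)(cos²r + 1) − 2(a₁+a₂)cos r)/(((a₁−a₂)cos r + a₁+a₂) sin r)`. -/
noncomputable def Rone (a₁ a₂ : ℕ) (r : ℝ) : ℝ :=
  (((a₂ : ℝ) - a₁) * ((Real.cos r)^2 + 1) - 2 * ((a₁ : ℝ) + a₂) * Real.cos r) /
    ((((a₁ : ℝ) - a₂) * Real.cos r + a₁ + a₂) * Real.sin r)

lemma deriv_W : deriv (fun s => Real.sin (2*s) / 2) = fun s => Real.cos (2*s) := by
  funext s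
  have h1 : HasDerivAt (fun s : ℝ => 2*s) 2 s := by
    simpa using (hasDerivAt_id s).const_mul 2
  have h : HasDerivAt (fun s : ℝ => Real.sin (2*s) / 2) (Real.cos (2*s)) s := by
    have := ((Real.hasDerivAt_sin (2*s)).comp s h1).div_const 2
    simpa [Function.comp] using this
  exact h.deriv

/-- For the rotationally symmetric metric above, the vector field
`W = (sin(2r)/2) ∂/∂r` (so `W¹ = sin(2r)/2`, `W² = 0`) is not projective: with
`R⁰ = R² = 0`, the second equation of the projective vector field PDE system,
`0 = −W¹_{rr} − R¹ W¹_r − R¹_r W¹`, fails at some `r ∈ (0,π)`. -/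
theorem W_is_not_a_projective_vector_field (a₁ a₂ : ℕ) (h : a₂ < a₁) (h2 : 1 ≤ a₂) :
    ¬ ∀ r ∈ Set.Ioo (0 : ℝ) Real.pi,
        -(deriv (deriv (fun s => Real.sin (2*s) / 2)) r)
          - Rone a₁ a₂ r * deriv (fun s => Real.sin (2*s) / 2) r
          - deriv (Rone a₁ a₂) r * (Real.sin (2*r) / 2) = 0 := by
  intro H
  have hmem : Real.pi / 2 ∈ Set.Ioo (0 : ℝ) Real.pi :=
    ⟨Real.pi_div_two_pos, half_lt_self Real.pi_pos⟩
  have := H (Real.pi / 2) hmem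
  rw [deriv_W] at this
  have h2pi : 2 * (Real.pi / 2) = Real.pi := by ring
  have hd2 : deriv (fun s : ℝ => Real.cos (2*s)) (Real.pi/2) = -Real.sin Real.pi * 2 := by
    have h1 : HasDerivAt (fun s : ℝ => 2*s) 2 (Real.pi/2) := by
      simpa using (hasDerivAt_id (Real.pi/2)).const_mul 2
    have h : HasDerivAt (fun s : ℝ => Real.cos (2*s))
        (-Real.sin (2*(Real.pi/2)) * 2) (Real.pi/2) := by
      have := (Real.hasDerivAt_cos (2*(Real.pi/2))).comp _ h1
      exact this
    rw [h.deriv, h2pi]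
  simp only [hd2, h2pi, Real.sin_pi, Real.cos_pi] at this
  have hRone : Rone a₁ a₂ (Real.pi/2) = ((a₂ : ℝ) - a₁) / ((a₁ : ℝ) + a₂) := by
    unfold Rone
    rw [Real.cos_pi_div_two, Real.sin_pi_div_two]
    ring_nf
  rw [hRone] at this
  have hnum : ((a₂ : ℝ) - a₁) < 0 := by
    have : (a₂ : ℝ) < a₁ := by exact_mod_cast h
    linarith
  have hden : (0:ℝ) < (a₁ : ℝ) + a₂ := by positivity
  have : ((a₂ : ℝ) - a₁) / ((a₁ : ℝ) + a₂) = 0 := by linarith [this]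
  have := div_ne_zero (ne_of_lt hnum) (ne_of_gt hden)
  contradiction
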